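/- Let f be a Hecke-multiplicative function, x ≥ 1 real, d a squarefree positive integer, and y ≥ 1 with yd ≤ x. Then Σ_{n ≤ x/y, d | n} |f(n)|² ≤ τ(d) · (∏_{p | d} (1 + |f(p)|²)) · F(yd) · Σ_{n ≤ x} |f(n)|², where F(t) = (Σ_{n ≤ x/t} |f(n)|²)/(Σ_{n ≤ x} |f(n)|²). -/

import Mathlib

open Finset ArithmeticFunction

def HeckeMult (f : ℕ → ℂ) : Prop :=
  f 1 = 1 ∧ ∀ m n : ℕ, 0 < m → 0 < n →
    f m * f n = ∑ d ∈ (Nat.gcd m n).divisors, f (m * n / d ^ 2)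
lemma moebius_sum_delta (k : ℕ) :
    ∑ e ∈ k.divisors, ((moebius e : ℤ) : ℂ) = if k = 1 then 1 else 0 := by
  have h := congrArg (fun g : ArithmeticFunction ℤ => g k) moebius_mul_coe_zeta
  simp only [coe_mul_zeta_apply, one_apply] at h
  rw [← Int.cast_sum, h]
  split <;> simp

lemma hecke_inv (f : ℕ → ℂ) (hf : HeckeMult f) {m n : ℕ} (hm : 0 < m) (hn : 0 < n) :
    f (m * n) = ∑ e ∈ (Nat.gcd m n).divisors,
      (moebius e : ℂ) * (f (m / e) * f (n / e)) := by
  set g := Nat.gcd m n with hg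
  have hg0 : 0 < g := Nat.gcd_pos_of_pos_left _ hm
  have hstep : ∀ e ∈ g.divisors,
      (moebius e : ℂ) * (f (m / e) * f (n / e)) =
        ∑ c ∈ (g / e).divisors, (moebius e : ℂ) * f (m * n / (e * c) ^ 2) := by
    intro e he
    rw [Nat.mem_divisors] at he
    obtain ⟨heg, -⟩ := he
    have hem : e ∣ m := heg.trans (Nat.gcd_dvd_left m n)
    have hen : e ∣ n := heg.trans (Nat.gcd_dvd_right m n)
    have he0 : 0 < e := Nat.pos_of_dvd_of_pos heg hg0
    have hge : Nat.gcd (m / e) (n / e) = g / e := by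
      have : e * Nat.gcd (m / e) (n / e) = g := by
        rw [← Nat.gcd_mul_left, Nat.mul_div_cancel' hem, Nat.mul_div_cancel' hen]
      rw [← this, Nat.mul_div_cancel_left _ he0]
    rw [hf.2 (m / e) (n / e) (Nat.div_pos (Nat.le_of_dvd hm hem) he0)
      (Nat.div_pos (Nat.le_of_dvd hn hen) he0), hge, Finset.mul_sum]
    refine Finset.sum_congr rfl fun c _ => ?_
    congr 2
    rw [Nat.div_mul_div_comm hem hen, Nat.div_div_eq_div_mul]
    ring_nf
  rw [Finset.sum_congr rfl hstep]
  rw [show f (m * n) = ∑ k ∈ g.divisors, (∑ e ∈ k.divisors, ((moebius e : ℤ) : ℂ)) *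
      f (m * n / k ^ 2) from ?_]
  · rw [Finset.sum_congr rfl (fun k _ => Finset.sum_mul _ _ _), Finset.sum_sigma',
      Finset.sum_sigma']
    refine Finset.sum_bij' (fun p _ => ⟨p.2, p.1 / p.2⟩) (fun p _ => ⟨p.1 * p.2, p.1⟩)
      ?_ ?_ ?_ ?_ ?_
    · rintro ⟨k, e⟩ hp
      simp only [Finset.mem_sigma, Nat.mem_divisors] at hp ⊢
      obtain ⟨⟨hkg, hgne⟩, hek, hkne⟩ := hp
      have he0 : 0 < e := Nat.pos_of_dvd_of_pos hek (Nat.pos_of_ne_zero hkne)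
      have heg : e ∣ g := hek.trans hkg
      refine ⟨⟨heg, hgne⟩, ?_, ?_⟩
      · rw [Nat.dvd_div_iff_mul_dvd heg, Nat.mul_div_cancel' hek]
        exact hkg
      · exact (Nat.div_pos (Nat.le_of_dvd hg0 heg) he0).ne'
    · rintro ⟨e, c⟩ hp
      simp only [Finset.mem_sigma, Nat.mem_divisors] at hp ⊢
      obtain ⟨⟨heg, hgne⟩, hc, hgene⟩ := hp
      have he0 : 0 < e := Nat.pos_of_dvd_of_pos heg hg0
      have hc0 : 0 < c := by
        rcases Nat.eq_zero_or_pos c with h | h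
        · exact absurd (zero_dvd_iff.mp (h ▸ hc)) hgene
        · exact h
      exact ⟨⟨(Nat.dvd_div_iff_mul_dvd heg).mp hc, hgne⟩, dvd_mul_right e c,
        (Nat.mul_pos he0 hc0).ne'⟩
    · rintro ⟨k, e⟩ hp
      simp only [Finset.mem_sigma, Nat.mem_divisors] at hp
      obtain ⟨⟨hkg, hgne⟩, hek, hkne⟩ := hp
      simp [Nat.mul_div_cancel' hek]
    · rintro ⟨e, c⟩ hp
      simp only [Finset.mem_sigma, Nat.mem_divisors] at hp
      obtain ⟨⟨heg, hgne⟩, hc, hgene⟩ := hp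
      have he0 : 0 < e := Nat.pos_of_dvd_of_pos heg hg0
      simp [Nat.mul_div_cancel_left _ he0]
    · rintro ⟨k, e⟩ hp
      simp only [Finset.mem_sigma, Nat.mem_divisors] at hp
      obtain ⟨⟨hkg, hgne⟩, hek, hkne⟩ := hp
      simp [Nat.mul_div_cancel' hek]
  · rw [Finset.sum_congr rfl (fun k _ => by rw [moebius_sum_delta])]
    have h1 : (1 : ℕ) ∈ g.divisors := Nat.one_mem_divisors.mpr hg0.ne'
    rw [Finset.sum_eq_single_of_mem 1 h1 (fun k _ hk => by simp [hk])]
    simp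
lemma hecke_mul_coprime (f : ℕ → ℂ) (hf : HeckeMult f) {m n : ℕ} (hm : 0 < m) (hn : 0 < n)
    (h : Nat.Coprime m n) : f (m * n) = f m * f n := by
  rw [hf.2 m n hm hn, Nat.Coprime.gcd_eq_one h]
  simp

lemma hecke_sum_divisors_eq_prod (f : ℕ → ℂ) (hf : HeckeMult f) {d : ℕ} (hd : Squarefree d) :
    ∑ e ∈ d.divisors, ‖f e‖ ^ 2
      = ∏ p ∈ d.primeFactors, (1 + ‖f p‖ ^ 2) := by
  set g : ArithmeticFunction ℝ :=
    ⟨fun n => if n = 0 then 0 else ‖f n‖ ^ 2, by simp⟩ with hgdef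
  have hgapp : ∀ n : ℕ, n ≠ 0 → g n = ‖f n‖ ^ 2 := by
    intro n hn; simp [hgdef, hn]
  have hmult : g.IsMultiplicative := by
    constructor
    · rw [hgapp 1 one_ne_zero, hf.1]; simp
    · intro m n hmn
      rcases Nat.eq_zero_or_pos m with hm | hm
      · simp [hgdef, hm]
      rcases Nat.eq_zero_or_pos n with hn | hn
      · simp [hgdef, hn]
      rw [hgapp m hm.ne', hgapp n hn.ne', hgapp (m * n) (Nat.mul_pos hm hn).ne',
        hecke_mul_coprime f hf hm hn hmn, norm_mul]
      ring
  rw [show ∏ p ∈ d.primeFactors, (1 + ‖f p‖ ^ 2)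
      = ∏ p ∈ d.primeFactors, (1 + g p) from Finset.prod_congr rfl fun p hp => by
        rw [hgapp p (Nat.prime_of_mem_primeFactors hp).ne_zero]]
  rw [hmult.prodPrimeFactors_one_add_of_squarefree hd]
  exact (Finset.sum_congr rfl fun e he => by
    rw [hgapp e (Nat.pos_of_mem_divisors he).ne']).symm

lemma hecke_abs_moebius_le (e : ℕ) : ‖((moebius e : ℤ) : ℂ)‖ ≤ 1 := by
  rw [Complex.norm_intCast]
  rcases moebius_eq_or e with h | h | h <;> simp [h]

lemma hecke_per_term (f : ℕ → ℂ) (hf : HeckeMult f) {d m : ℕ} (hd0 : 0 < d) (hm : 0 < m) :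
    ‖f (d * m)‖ ^ 2 ≤ (d.divisors.card : ℝ) *
      ∑ e ∈ d.divisors,
        (if e ∣ m then ‖f (d / e)‖ ^ 2 * ‖f (m / e)‖ ^ 2 else 0) := by
  have hset : (Nat.gcd d m).divisors = d.divisors.filter (fun e => e ∣ m) := by
    ext e
    simp only [Nat.mem_divisors, Finset.mem_filter]
    constructor
    · rintro ⟨he, -⟩
      exact ⟨⟨he.trans (Nat.gcd_dvd_left d m), hd0.ne'⟩, he.trans (Nat.gcd_dvd_right d m)⟩
    · rintro ⟨⟨hed, -⟩, hem⟩
      exact ⟨Nat.dvd_gcd hed hem, (Nat.gcd_pos_of_pos_left m hd0).ne'⟩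
  have h1 : ‖f (d * m)‖ ≤
      ∑ e ∈ (Nat.gcd d m).divisors, ‖f (d / e)‖ * ‖f (m / e)‖ := by
    rw [hecke_inv f hf hd0 hm]
    refine (norm_sum_le _ _).trans (Finset.sum_le_sum fun e _ => ?_)
    rw [norm_mul, norm_mul]
    have h2 := hecke_abs_moebius_le e
    have h3 : (0:ℝ) ≤ ‖f (d / e)‖ * ‖f (m / e)‖ := by positivity
    nlinarith [norm_nonneg (f (d / e)), norm_nonneg (f (m / e))]
  have h2 : ‖f (d * m)‖ ^ 2 ≤
      ((Nat.gcd d m).divisors.card : ℝ) * ∑ e ∈ (Nat.gcd d m).divisors,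
        (‖f (d / e)‖ * ‖f (m / e)‖) ^ 2 := by
    calc ‖f (d * m)‖ ^ 2
        ≤ (∑ e ∈ (Nat.gcd d m).divisors,
            ‖f (d / e)‖ * ‖f (m / e)‖) ^ 2 := by
          apply pow_le_pow_left₀ (norm_nonneg _) h1
      _ ≤ _ := sq_sum_le_card_mul_sum_sq
  refine h2.trans ?_
  have hcard : ((Nat.gcd d m).divisors.card : ℝ) ≤ (d.divisors.card : ℝ) := by
    exact_mod_cast Finset.card_le_card
      (Nat.divisors_subset_of_dvd hd0.ne' (Nat.gcd_dvd_left d m))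
  have hsum_eq : ∑ e ∈ (Nat.gcd d m).divisors,
      (‖f (d / e)‖ * ‖f (m / e)‖) ^ 2 =
      ∑ e ∈ d.divisors,
        (if e ∣ m then ‖f (d / e)‖ ^ 2 * ‖f (m / e)‖ ^ 2 else 0) := by
    rw [hset, Finset.sum_filter]
    exact Finset.sum_congr rfl fun e _ => by split <;> ring_nf
  rw [hsum_eq]
  apply mul_le_mul_of_nonneg_right hcard
  apply Finset.sum_nonneg
  intro e _
  split <;> positivity

lemma hecke_mult_sum (f : ℕ → ℂ) {M e : ℕ} (he : 0 < e) :
    ∑ m ∈ (Finset.Icc 1 M).filter (fun m => e ∣ m), ‖f (m / e)‖ ^ 2 =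
      ∑ k ∈ Finset.Icc 1 (M / e), ‖f k‖ ^ 2 := by
  refine Finset.sum_bij' (fun m _ => m / e) (fun k _ => e * k) ?_ ?_ ?_ ?_ ?_
  · intro m hm
    simp only [Finset.mem_filter, Finset.mem_Icc] at hm ⊢
    obtain ⟨⟨hm1, hm2⟩, hdvd⟩ := hm
    exact ⟨(Nat.one_le_div_iff he).mpr (Nat.le_of_dvd hm1 hdvd), Nat.div_le_div_right hm2⟩
  · intro k hk
    simp only [Finset.mem_filter, Finset.mem_Icc] at hk ⊢
    obtain ⟨hk1, hk2⟩ := hk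
    refine ⟨⟨Nat.one_le_iff_ne_zero.mpr (by positivity), ?_⟩, dvd_mul_right e k⟩
    calc e * k = k * e := mul_comm e k
      _ ≤ M := (Nat.le_div_iff_mul_le he).mp hk2
  · intro m hm
    simp only [Finset.mem_filter] at hm
    exact Nat.mul_div_cancel' hm.2
  · intro k _
    exact Nat.mul_div_cancel_left k he
  · intro m _
    rfl

theorem hecke_sum_div_d (f : ℕ → ℂ) (hf : HeckeMult f) (x y : ℝ) (hx : 1 ≤ x)
    (hy : 1 ≤ y) (d : ℕ) (hd : Squarefree d) (hyd : y * d ≤ x)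
    (htot : 0 < ∑ n ∈ Finset.Icc 1 ⌊x⌋₊, ‖f n‖ ^ 2)
    (F : ℝ → ℝ)
    (hF : ∀ t : ℝ, F t = (∑ n ∈ Finset.Icc 1 ⌊x / t⌋₊, ‖f n‖ ^ 2) /
      (∑ n ∈ Finset.Icc 1 ⌊x⌋₊, ‖f n‖ ^ 2)) :
    ∑ n ∈ (Finset.Icc 1 ⌊x / y⌋₊).filter (fun n => d ∣ n), ‖f n‖ ^ 2 ≤
      (d.divisors.card : ℝ) * (∏ p ∈ d.primeFactors, (1 + ‖f p‖ ^ 2)) *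
        F (y * d) * ∑ n ∈ Finset.Icc 1 ⌊x⌋₊, ‖f n‖ ^ 2 := by
  have hd0 : 0 < d := Nat.pos_of_ne_zero hd.ne_zero
  set M := ⌊x / (y * ↑d)⌋₊ with hM
  set T := ∑ n ∈ Finset.Icc 1 M, ‖f n‖ ^ 2 with hT
  have hFS : F (y * d) * (∑ n ∈ Finset.Icc 1 ⌊x⌋₊, ‖f n‖ ^ 2) = T := by
    rw [hF]
    exact div_mul_cancel₀ _ htot.ne'
  rw [mul_assoc, hFS]
  -- floor arithmetic
  have hfloor : ⌊x / y⌋₊ / d = M := by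
    rw [hM, show x / (y * (d : ℝ)) = (x / y) / (d : ℝ) by ring, Nat.floor_div_natCast]
  -- rewrite LHS as sum over m ≤ M of |f (d*m)|^2
  have hL : ∑ n ∈ (Finset.Icc 1 ⌊x / y⌋₊).filter (fun n => d ∣ n), ‖f n‖ ^ 2 =
      ∑ m ∈ Finset.Icc 1 M, ‖f (d * m)‖ ^ 2 := by
    refine Finset.sum_bij' (fun n _ => n / d) (fun m _ => d * m) ?_ ?_ ?_ ?_ ?_
    · intro n hn
      simp only [Finset.mem_filter, Finset.mem_Icc] at hn ⊢
      obtain ⟨⟨hn1, hn2⟩, hdvd⟩ := hn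
      refine ⟨(Nat.one_le_div_iff hd0).mpr (Nat.le_of_dvd hn1 hdvd), ?_⟩
      rw [← hfloor]
      exact Nat.div_le_div_right hn2
    · intro m hm
      simp only [Finset.mem_filter, Finset.mem_Icc] at hm ⊢
      obtain ⟨hm1, hm2⟩ := hm
      refine ⟨⟨Nat.one_le_iff_ne_zero.mpr (by positivity), ?_⟩, dvd_mul_right d m⟩
      rw [← hfloor] at hm2
      calc d * m = m * d := mul_comm d m
        _ ≤ ⌊x / y⌋₊ := (Nat.le_div_iff_mul_le hd0).mp hm2
    · intro n hn
      simp only [Finset.mem_filter] at hn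
      exact Nat.mul_div_cancel' hn.2
    · intro m _
      exact Nat.mul_div_cancel_left m hd0
    · intro n hn
      simp only [Finset.mem_filter] at hn
      rw [Nat.mul_div_cancel' hn.2]
  rw [hL]
  have hTnonneg : ∀ N : ℕ, (0:ℝ) ≤ ∑ n ∈ Finset.Icc 1 N, ‖f n‖ ^ 2 := by
    intro N; apply Finset.sum_nonneg; intro n _; positivity
  calc ∑ m ∈ Finset.Icc 1 M, ‖f (d * m)‖ ^ 2
      ≤ ∑ m ∈ Finset.Icc 1 M, ((d.divisors.card : ℝ) *
          ∑ e ∈ d.divisors,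
            (if e ∣ m then ‖f (d / e)‖ ^ 2 * ‖f (m / e)‖ ^ 2 else 0)) := by
        refine Finset.sum_le_sum fun m hm => ?_
        exact hecke_per_term f hf hd0 (Finset.mem_Icc.mp hm).1
    _ = (d.divisors.card : ℝ) * ∑ e ∈ d.divisors, ∑ m ∈ Finset.Icc 1 M,
          (if e ∣ m then ‖f (d / e)‖ ^ 2 * ‖f (m / e)‖ ^ 2 else 0) := by
        rw [← Finset.mul_sum, Finset.sum_comm]
    _ ≤ (d.divisors.card : ℝ) * ∑ e ∈ d.divisors, ‖f (d / e)‖ ^ 2 * T := by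
        refine mul_le_mul_of_nonneg_left (Finset.sum_le_sum fun e he => ?_) (by positivity)
        have he0 : 0 < e := Nat.pos_of_mem_divisors he
        have step1 : ∑ m ∈ Finset.Icc 1 M,
            (if e ∣ m then ‖f (d / e)‖ ^ 2 * ‖f (m / e)‖ ^ 2 else 0) =
            ‖f (d / e)‖ ^ 2 * ∑ m ∈ (Finset.Icc 1 M).filter (fun m => e ∣ m),
              ‖f (m / e)‖ ^ 2 := by
          rw [Finset.mul_sum, ← Finset.sum_filter]
        rw [step1, hecke_mult_sum f he0]
        refine mul_le_mul_of_nonneg_left ?_ (by positivity)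
        refine Finset.sum_le_sum_of_subset_of_nonneg
          (Finset.Icc_subset_Icc_right (Nat.div_le_self M e)) ?_
        intro k _ _; positivity
    _ = (d.divisors.card : ℝ) *
          (∏ p ∈ d.primeFactors, (1 + ‖f p‖ ^ 2)) * T := by
        rw [← Finset.sum_mul, mul_assoc]
        congr 2
        rw [show (∑ e ∈ d.divisors, ‖f (d / e)‖ ^ 2)
            = ∑ e ∈ d.divisors, ‖f e‖ ^ 2 from
          Nat.sum_div_divisors d (fun e => ‖f e‖ ^ 2)]
        exact hecke_sum_divisors_eq_prod f hf hd
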